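/- Every ν-Schröder tree is obtained from some ν-binary tree by a sequence of contractions (deletions of nodes that preserve the ν-Schröder tree property), and conversely every such contraction of a ν-binary tree yields a ν-Schröder tree. -/
import Mathlib


/-- Steps of a (Schröder) lattice path: north, east, diagonal. -/
inductive Step : Type
  | N | E | D
deriving DecidableEq, Repr

/-- Total horizontal displacement of a path. -/
def eLen (p : List Step) : ℕ := p.count Step.E + p.count Step.D

/-- Total vertical displacement of a path. -/
def nLen (p : List Step) : ℕ := p.count Step.N + p.count Step.D

/-- A lattice path uses only `N` and `E` steps. -/
def IsLatticePath (ν : List Step) : Prop := Step.D ∉ ν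

/-- `colVal p x` is twice the starting height of the step of `p` crossing the vertical
strip between abscissas `x` and `x+1`, plus `1` if that step is diagonal.  Comparing these
values columnwise is equivalent to comparing the heights of the paths over each strip. -/
def colVal : List Step → ℕ → ℕ
  | [], _ => 0
  | Step.N :: p, x => colVal p x + 2
  | Step.E :: _, 0 => 0
  | Step.E :: p, x+1 => colVal p x
  | Step.D :: _, 0 => 1
  | Step.D :: p, x+1 => colVal p x + 2

/-- `π` stays weakly above `ρ` (same endpoints intended). -/
def WeaklyAbove (π ρ : List Step) : Prop := ∀ x, colVal ρ x ≤ colVal π x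

/-- Replace every peak (consecutive `NE`) of a path by a diagonal step; applied to `ν`
this gives the path `μ` of the large ν-Schröder path definition. -/
def cutPeaks : List Step → List Step
  | [] => []
  | Step.N :: Step.E :: p => Step.D :: cutPeaks p
  | s :: p => s :: cutPeaks p

/-- A ν-Dyck path: an `N,E` path with the same endpoints as `ν` staying weakly above `ν`. -/
def IsNuDyck (ν π : List Step) : Prop :=
  Step.D ∉ π ∧ eLen π = eLen ν ∧ nLen π = nLen ν ∧ WeaklyAbove π ν

/-- A (small) ν-Schröder path: an `N,E,D` path with the same endpoints as `ν` staying weakly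
above `ν` (this automatically forbids diagonal steps on the ν-diagonal). -/
def IsSmallSchroder (ν π : List Step) : Prop :=
  eLen π = eLen ν ∧ nLen π = nLen ν ∧ WeaklyAbove π ν

/-- A large ν-Schröder path: an `N,E,D` path with the same endpoints as `ν` staying weakly
above the path obtained from `ν` by replacing each peak by a diagonal step. -/
def IsLargeSchroder (ν π : List Step) : Prop :=
  eLen π = eLen ν ∧ nLen π = nLen ν ∧ WeaklyAbove π (cutPeaks ν)

/-- Number of peaks (consecutive `NE` pairs). -/
def peaks (p : List Step) : ℕ := (p.zip p.tail).count (Step.N, Step.E)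

/-- Number of valleys (consecutive `EN` pairs). -/
def valleys (p : List Step) : ℕ := (p.zip p.tail).count (Step.E, Step.N)

/-- Lattice points at which valleys of a path occur (starting the path at `(x,y)`). -/
def valleyPts : List Step → ℕ → ℕ → List (ℕ × ℕ)
  | [], _, _ => []
  | Step.E :: p, x, y =>
      (if p.head? = some Step.N then [(x+1, y)] else []) ++ valleyPts p (x+1) y
  | Step.N :: p, x, y => valleyPts p x (y+1)
  | Step.D :: p, x, y => valleyPts p (x+1) (y+1)

/-- Lattice points at which high peaks (peaks strictly above `ν`) of a path occur. -/
def highPeakPts (ν : List Step) : List Step → ℕ → ℕ → List (ℕ × ℕ)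
  | [], _, _ => []
  | Step.N :: p, x, y =>
      (if p.head? = some Step.E ∧ colVal ν x < 2*(y+1) then [(x, y+1)] else []) ++
        highPeakPts ν p x (y+1)
  | Step.E :: p, x, y => highPeakPts ν p (x+1) y
  | Step.D :: p, x, y => highPeakPts ν p (x+1) (y+1)

/-- Number of high peaks of `π` relative to `ν`. -/
def highPeaks (ν π : List Step) : ℕ := (highPeakPts ν π 0 0).length

/-- j-th ν-Narayana number: number of ν-Dyck paths with exactly `j` valleys. -/
noncomputable def Nar (ν : List Step) (j : ℕ) : ℕ :=
  Nat.card {π : List Step // IsNuDyck ν π ∧ valleys π = j}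

/-- Number of small ν-Schröder paths with exactly `i` diagonal steps. -/
noncomputable def schNum (ν : List Step) (i : ℕ) : ℕ :=
  Nat.card {π : List Step // IsSmallSchroder ν π ∧ π.count Step.D = i}

/-- `lowH ν x` is the lowest height of a point of `ν` at abscissa `x`. -/
def lowH : List Step → ℕ → ℕ
  | _, 0 => 0
  | [], _+1 => 0
  | Step.N :: p, x+1 => lowH p (x+1) + 1
  | Step.E :: p, x+1 => lowH p x
  | Step.D :: p, x+1 => lowH p x + 1

/-- The lowest lattice path from `(0,0)` to `(b,a)` weakly above the line segment
from `(0,0)` to `(b,a)`. -/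
def nuAB (a b : ℕ) : List Step :=
  (List.range b).flatMap (fun x =>
    List.replicate (((x+1)*a + b - 1)/b - (x*a + b - 1)/b) Step.N ++ [Step.E])

/-- Number of large rational `(a,b)`-Schröder paths with `i` diagonal steps. -/
noncomputable def largeCount (a b i : ℕ) : ℕ :=
  Nat.card {π : List Step // IsLargeSchroder (nuAB a b) π ∧ π.count Step.D = i}

/-- Number of small rational `(a,b)`-Schröder paths with `i` diagonal steps. -/
noncomputable def smallCount (a b i : ℕ) : ℕ :=
  Nat.card {π : List Step // IsSmallSchroder (nuAB a b) π ∧ π.count Step.D = i}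

/-- Binomial coefficient with an integer lower entry (zero when negative). -/
def chooseZ (n : ℕ) (k : ℤ) : ℕ := if 0 ≤ k then n.choose k.toNat else 0

/-- The region weakly above `ν` in the rectangle `[0,b] × [0,a]`. -/
def InRegion (ν : List Step) (p : ℕ × ℕ) : Prop :=
  p.1 ≤ eLen ν ∧ p.2 ≤ nLen ν ∧ lowH ν p.1 ≤ p.2

/-- Two points of the region are ν-incompatible if one is strictly southwest of the other and
the rectangle they span lies in the region (equivalently its bottom-right corner does). -/
def Incompat (ν : List Step) (p q : ℕ × ℕ) : Prop :=
  ((p.1 < q.1 ∧ p.2 < q.2) ∨ (q.1 < p.1 ∧ q.2 < p.2)) ∧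
    InRegion ν (max p.1 q.1, min p.2 q.2)

/-- A ν-binary tree: a maximal set of pairwise ν-compatible points of the region. -/
def IsBinaryTree (ν : List Step) (T : Finset (ℕ × ℕ)) : Prop :=
  (∀ p ∈ T, InRegion ν p) ∧ (∀ p ∈ T, ∀ q ∈ T, ¬ Incompat ν p q) ∧
    ∀ r, InRegion ν r → (∀ p ∈ T, ¬ Incompat ν r p) → r ∈ T

/-- A ν-Schröder tree: pairwise ν-compatible points of the region containing the root
`(0,a)` and meeting every row and every column. -/
def IsSchroderTree (ν : List Step) (T : Finset (ℕ × ℕ)) : Prop :=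
  (∀ p ∈ T, InRegion ν p) ∧ (∀ p ∈ T, ∀ q ∈ T, ¬ Incompat ν p q) ∧
    (0, nLen ν) ∈ T ∧ (∀ y ≤ nLen ν, ∃ p ∈ T, p.2 = y) ∧ (∀ x ≤ eLen ν, ∃ p ∈ T, p.1 = x)

/-- One contraction step: delete a node, provided the result is still a ν-Schröder tree. -/
def ContractStep (ν : List Step) (T T' : Finset (ℕ × ℕ)) : Prop :=
  ∃ q ∈ T, T' = T.erase q ∧ IsSchroderTree ν T'

/-- `p` is a leaf of the (plane tree associated to the) node set `T`: no node strictly below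
it in its column and none strictly to its right in its row. -/
def IsLeafIn (T : Finset (ℕ × ℕ)) (p : ℕ × ℕ) : Prop :=
  (∀ q ∈ T, ¬(q.1 = p.1 ∧ q.2 < p.2)) ∧ (∀ q ∈ T, ¬(q.2 = p.2 ∧ p.1 < q.1))

/-- Starting points of vertical runs and ending points of horizontal runs of `ν`. -/
def leafPts (ν : List Step) : Finset (ℕ × ℕ) :=
  (valleyPts ν 0 0).toFinset ∪ (if ν.head? = some Step.N then {((0 : ℕ), (0 : ℕ))} else ∅) ∪
    (if ν.getLast? = some Step.E then {(eLen ν, nLen ν)} else ∅)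

/-- `horizNu ν x y`: maximal number of east steps that can be placed starting at `(x,y)`
before crossing `ν` (staying within the bounding rectangle). -/
def horizNu (ν : List Step) (x y : ℕ) : ℕ :=
  ((Finset.Icc 1 (eLen ν - x)).filter (fun k => lowH ν (x + k) ≤ y)).card

/-- No `N` step of the given path (started at `(x,y)`) has initial point with
`horizNu`-value `h`. -/
def noNAt (ν : List Step) (h : ℕ) : List Step → ℕ → ℕ → Prop
  | [], _, _ => True
  | Step.N :: p, x, y => horizNu ν x y ≠ h ∧ noNAt ν h p x (y+1)
  | Step.E :: p, x, y => noNAt ν h p (x+1) y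
  | Step.D :: p, x, y => noNAt ν h p (x+1) (y+1)

/-- Right contraction: replace a consecutive `EN` pair (a valley) by a `D` step. -/
def RightC (μ lam : List Step) : Prop :=
  ∃ p q, μ = p ++ Step.E :: Step.N :: q ∧ lam = p ++ Step.D :: q

/-- Left contraction: delete an `E` step together with the most recent preceding `N` step
whose initial point has the same `horizNu` statistic as the initial point of the `E` step,
shift the intermediate subpath, and place a `D` step at the initial point of the `N` step. -/
def LeftC (ν μ lam : List Step) : Prop :=
  ∃ p m q, μ = p ++ Step.N :: (m ++ Step.E :: q) ∧ lam = p ++ Step.D :: (m ++ q) ∧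
    horizNu ν (eLen p) (nLen p)
      = horizNu ν (eLen (p ++ Step.N :: m)) (nLen (p ++ Step.N :: m)) ∧
    noNAt ν (horizNu ν (eLen (p ++ Step.N :: m)) (nLen (p ++ Step.N :: m)))
      m (eLen p) (nLen p + 1)

/-- Diagonal contraction: delete an `E` step ending at the initial point `r` of a `D` step,
together with the most recent preceding `N` step whose initial point `s` satisfies
`horizNu s = horizNu r`, shift the intermediate subpath, and place a `D` step at `s`. -/
def DiagC (ν μ lam : List Step) : Prop :=
  ∃ p m q, μ = p ++ Step.N :: (m ++ Step.E :: Step.D :: q) ∧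
    lam = p ++ Step.D :: (m ++ Step.D :: q) ∧
    horizNu ν (eLen p) (nLen p)
      = horizNu ν (eLen (p ++ Step.N :: m) + 1) (nLen (p ++ Step.N :: m)) ∧
    noNAt ν (horizNu ν (eLen (p ++ Step.N :: m) + 1) (nLen (p ++ Step.N :: m)))
      m (eLen p) (nLen p + 1)

/-- Cover relation of the contraction poset of ν-Schröder paths. -/
def Covers (ν μ lam : List Step) : Prop :=
  IsSmallSchroder ν μ ∧ IsSmallSchroder ν lam ∧
    (RightC μ lam ∨ LeftC ν μ lam ∨ DiagC ν μ lam)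

/-- The Morse matching: `σ` (having a `D` step preceded by no valley) is matched with the
path `π` obtained by replacing the first such `D` step by `EN`. -/
def MorseM (ν : List Step) : Set (List Step × List Step) :=
  { z | ∃ p q, Step.D ∉ p ∧ valleys p = 0 ∧
      z.2 = p ++ Step.D :: q ∧ z.1 = p ++ Step.E :: Step.N :: q ∧ IsSmallSchroder ν z.2 }

/-- Twice the area between a small ν-Schröder path and `ν`. -/
def area2 (ν π : List Step) : ℕ :=
  ∑ x ∈ Finset.range (eLen ν), (colVal π x - colVal ν x)

/-- An `(I,J̄)`-forest: increasing, non-crossing arcs. -/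
def IsIJForest (I J : Finset ℕ) (F : Finset (ℕ × ℕ)) : Prop :=
  (∀ a ∈ F, a.1 ∈ I ∧ a.2 ∈ J ∧ a.1 < a.2) ∧
    (∀ a ∈ F, ∀ a' ∈ F, ¬(a.1 < a'.1 ∧ a'.1 < a.2 ∧ a.2 < a'.2))

/-- A covering `(I,J̄)`-forest: contains the arc `(1,n)` and has no isolated node. -/
def IsCoveringForest (n : ℕ) (I J : Finset ℕ) (F : Finset (ℕ × ℕ)) : Prop :=
  IsIJForest I J F ∧ (1, n) ∈ F ∧
    (∀ i ∈ I, ∃ a ∈ F, a.1 = i) ∧ (∀ j ∈ J, ∃ a ∈ F, a.2 = j)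

/-- The lattice path read off from the interleaving of `I` and `J̄` (elements `2,…,n-1`,
`E` for elements of `I`, `N` for the others). -/
def nuOf (n : ℕ) (I : Finset ℕ) : List Step :=
  (List.range' 2 (n - 2)).map (fun k => if k ∈ I then Step.E else Step.N)

lemma lowH_le_nLen (ν : List Step) (x : ℕ) : lowH ν x ≤ nLen ν := by
  induction ν generalizing x with
  | nil => cases x <;> simp [lowH, nLen]
  | cons s p ih =>
    cases x with
    | zero => simp [lowH]
    | succ x =>
      cases s <;> simp [lowH, nLen, List.count_cons] <;>
        [skip; skip; skip] <;>
        first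
          | (have := ih (x+1); simp [nLen] at this ⊢; omega)
          | (have := ih x; simp [nLen] at this ⊢; omega)

lemma incompat_symm {ν : List Step} {p q : ℕ × ℕ} (h : Incompat ν p q) : Incompat ν q p := by
  obtain ⟨h1, h2⟩ := h
  exact ⟨h1.symm, by rwa [max_comm, min_comm]⟩

lemma lowH_zero (ν : List Step) : lowH ν 0 = 0 := by
  cases ν with
  | nil => rfl
  | cons s p => cases s <;> rfl

lemma binary_isSchroder (ν : List Step) (B : Finset (ℕ × ℕ)) (hB : IsBinaryTree ν B) :
    IsSchroderTree ν B := by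
  classical
  obtain ⟨hreg, hcomp, hmax⟩ := hB
  refine ⟨hreg, hcomp, ?_, ?_, ?_⟩
  · -- root
    apply hmax
    · exact ⟨Nat.zero_le _, le_refl _, by rw [lowH_zero]; exact Nat.zero_le _⟩
    · rintro p hp ⟨h1 | h1, -⟩
      · exact absurd h1.2 (not_lt.2 (hreg p hp).2.1)
      · exact absurd h1.1 (Nat.not_lt_zero _)
  · -- rows
    intro y hy
    set X := (Finset.range (eLen ν + 1)).filter
      (fun x => lowH ν x ≤ y ∧ ∀ q ∈ B, ¬(q.1 < x ∧ q.2 < y ∧ InRegion ν (x, q.2))) with hX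
    have h0 : 0 ∈ X := by
      simp only [hX, Finset.mem_filter, Finset.mem_range]
      exact ⟨Nat.succ_pos _, by rw [lowH_zero]; exact Nat.zero_le _,
        fun q hq h => absurd h.1 (Nat.not_lt_zero _)⟩
    have hne : X.Nonempty := ⟨0, h0⟩
    set x' := X.max' hne with hx'def
    have hx' : x' ∈ X := X.max'_mem hne
    simp only [hX, Finset.mem_filter, Finset.mem_range] at hx'
    obtain ⟨hx'r, hx'low, hx'sw⟩ := hx'
    have hrreg : InRegion ν (x', y) := ⟨Nat.lt_succ_iff.1 hx'r, hy, hx'low⟩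
    have hrcomp : ∀ q ∈ B, ¬ Incompat ν (x', y) q := by
      rintro q hq ⟨h1 | h1, hc⟩
      · -- NE case
        have hmax1 : max x' q.1 = q.1 := max_eq_right (le_of_lt h1.1)
        have hmin1 : min y q.2 = y := min_eq_left (le_of_lt h1.2)
        rw [hmax1, hmin1] at hc
        have hq1 : q.1 ∉ X := fun hmem => absurd (X.le_max' q.1 hmem) (not_le.2 h1.1)
        simp only [hX, Finset.mem_filter, Finset.mem_range, not_and, not_forall] at hq1
        have hq1' := hq1 (Nat.lt_succ_of_le (hreg q hq).1)
        obtain ⟨q', hq'B, h1', h2', h3'⟩ := hq1' hc.2.2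
        rw [not_not] at h3'
        refine hcomp q' hq'B q hq ⟨Or.inl ⟨h1', lt_trans h2' h1.2⟩, ?_⟩
        rwa [max_eq_right (le_of_lt h1'), min_eq_left (le_of_lt (lt_trans h2' h1.2))]
      · -- SW case
        have hmax1 : max x' q.1 = x' := max_eq_left (le_of_lt h1.1)
        have hmin1 : min y q.2 = q.2 := min_eq_right (le_of_lt h1.2)
        rw [hmax1, hmin1] at hc
        exact hx'sw q hq ⟨h1.1, h1.2, hc⟩
    exact ⟨(x', y), hmax (x', y) hrreg hrcomp, rfl⟩
  · -- columns
    intro x hx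
    set Y := (Finset.range (nLen ν + 1)).filter
      (fun y => lowH ν x ≤ y ∧ ∀ q ∈ B, ¬(x < q.1 ∧ y < q.2 ∧ InRegion ν (q.1, y))) with hY
    have h0 : nLen ν ∈ Y := by
      simp only [hY, Finset.mem_filter, Finset.mem_range]
      exact ⟨Nat.lt_succ_self _, lowH_le_nLen ν x,
        fun q hq h => absurd h.2.1 (not_lt.2 (hreg q hq).2.1)⟩
    have hne : Y.Nonempty := ⟨_, h0⟩
    set y' := Y.min' hne with hy'def
    have hy' : y' ∈ Y := Y.min'_mem hne
    simp only [hY, Finset.mem_filter, Finset.mem_range] at hy'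
    obtain ⟨hy'r, hy'low, hy'ne⟩ := hy'
    have hrreg : InRegion ν (x, y') := ⟨hx, Nat.lt_succ_iff.1 hy'r, hy'low⟩
    have hrcomp : ∀ q ∈ B, ¬ Incompat ν (x, y') q := by
      rintro q hq ⟨h1 | h1, hc⟩
      · -- NE case: contradicts filter property of y'
        have hmax1 : max x q.1 = q.1 := max_eq_right (le_of_lt h1.1)
        have hmin1 : min y' q.2 = y' := min_eq_left (le_of_lt h1.2)
        rw [hmax1, hmin1] at hc
        exact hy'ne q hq ⟨h1.1, h1.2, hc⟩
      · -- SW case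
        have hmax1 : max x q.1 = x := max_eq_left (le_of_lt h1.1)
        have hmin1 : min y' q.2 = q.2 := min_eq_right (le_of_lt h1.2)
        rw [hmax1, hmin1] at hc
        have hq2 : q.2 ∉ Y := fun hmem => absurd (Y.min'_le q.2 hmem) (not_le.2 h1.2)
        simp only [hY, Finset.mem_filter, Finset.mem_range, not_and, not_forall] at hq2
        have hq2' := hq2 (Nat.lt_succ_of_le (hreg q hq).2.1)
        obtain ⟨q', hq'B, h1', h2', h3'⟩ := hq2' hc.2.2
        rw [not_not] at h3'
        refine hcomp q hq q' hq'B ⟨Or.inl ⟨lt_trans h1.1 h1', h2'⟩, ?_⟩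
        rwa [max_eq_right (le_of_lt (lt_trans h1.1 h1')), min_eq_left (le_of_lt h2')]
    exact ⟨(x, y'), hmax (x, y') hrreg hrcomp, rfl⟩

lemma exists_binary_extension (ν : List Step) (T : Finset (ℕ × ℕ))
    (hreg : ∀ p ∈ T, InRegion ν p) (hcomp : ∀ p ∈ T, ∀ q ∈ T, ¬ Incompat ν p q) :
    ∃ B, IsBinaryTree ν B ∧ T ⊆ B := by
  classical
  set grid := Finset.range (eLen ν + 1) ×ˢ Finset.range (nLen ν + 1) with hg
  have hsub : ∀ S : Finset (ℕ × ℕ), (∀ p ∈ S, InRegion ν p) → S ⊆ grid := by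
    intro S h p hp
    simp only [hg, Finset.mem_product, Finset.mem_range]
    exact ⟨Nat.lt_succ_of_le (h p hp).1, Nat.lt_succ_of_le (h p hp).2.1⟩
  set C := grid.powerset.filter
    (fun S => T ⊆ S ∧ (∀ p ∈ S, InRegion ν p) ∧ ∀ p ∈ S, ∀ q ∈ S, ¬ Incompat ν p q) with hC
  have hTC : T ∈ C := by
    simp only [hC, Finset.mem_filter, Finset.mem_powerset]
    exact ⟨hsub T hreg, Finset.Subset.refl T, hreg, hcomp⟩
  obtain ⟨B, hBC, hBmax⟩ := C.exists_max_image Finset.card ⟨T, hTC⟩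
  simp only [hC, Finset.mem_filter, Finset.mem_powerset] at hBC
  obtain ⟨hBg, hTB, hBreg, hBcomp⟩ := hBC
  refine ⟨B, ⟨hBreg, hBcomp, ?_⟩, hTB⟩
  intro r hr hrcomp
  by_contra hrB
  have hins : insert r B ∈ C := by
    simp only [hC, Finset.mem_filter, Finset.mem_powerset]
    refine ⟨hsub _ ?_, hTB.trans (Finset.subset_insert r B), ?_, ?_⟩
    · intro p hp
      rcases Finset.mem_insert.1 hp with h | h
      · exact h ▸ hr
      · exact hBreg p h
    · intro p hp
      rcases Finset.mem_insert.1 hp with h | h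
      · exact h ▸ hr
      · exact hBreg p h
    · intro p hp q hq
      rcases Finset.mem_insert.1 hp with h | h <;> rcases Finset.mem_insert.1 hq with h' | h'
      · subst h; subst h'
        rintro ⟨h1 | h1, -⟩ <;> exact absurd h1.1 (lt_irrefl _)
      · exact h ▸ hrcomp q h'
      · exact h' ▸ fun hi => hrcomp p h (incompat_symm hi)
      · exact hBcomp p h q h'
  have := hBmax _ hins
  rw [Finset.card_insert_of_notMem hrB] at this
  omega

lemma sandwich {ν : List Step} {T S B : Finset (ℕ × ℕ)} (hT : IsSchroderTree ν T)
    (hBreg : ∀ p ∈ B, InRegion ν p) (hBcomp : ∀ p ∈ B, ∀ q ∈ B, ¬ Incompat ν p q)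
    (h1 : T ⊆ S) (h2 : S ⊆ B) : IsSchroderTree ν S := by
  obtain ⟨-, -, hroot, hrow, hcol⟩ := hT
  exact ⟨fun p hp => hBreg p (h2 hp), fun p hp q hq => hBcomp p (h2 hp) q (h2 hq),
    h1 hroot,
    fun y hy => (hrow y hy).elim (fun p hp => ⟨p, h1 hp.1, hp.2⟩),
    fun x hx => (hcol x hx).elim (fun p hp => ⟨p, h1 hp.1, hp.2⟩)⟩

lemma chain (ν : List Step) {T B : Finset (ℕ × ℕ)} (hT : IsSchroderTree ν T)
    (hBreg : ∀ p ∈ B, InRegion ν p) (hBcomp : ∀ p ∈ B, ∀ q ∈ B, ¬ Incompat ν p q)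
    (hTB : T ⊆ B) : Relation.ReflTransGen (ContractStep ν) B T := by
  classical
  suffices h : ∀ n (S : Finset (ℕ × ℕ)), (S \ T).card = n → T ⊆ S → S ⊆ B →
      Relation.ReflTransGen (ContractStep ν) S T by
    exact h _ B rfl hTB (Finset.Subset.refl B)
  intro n
  induction n with
  | zero =>
    intro S hcard hTS hSB
    have : S \ T = ∅ := Finset.card_eq_zero.1 hcard
    have hST : S ⊆ T := fun p hp => by
      by_contra hpt
      exact absurd (Finset.mem_sdiff.2 ⟨hp, hpt⟩) (by simp [this])
    rw [Finset.Subset.antisymm hST hTS]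
  | succ n ih =>
    intro S hcard hTS hSB
    have hne : (S \ T).Nonempty := Finset.card_pos.1 (by omega)
    obtain ⟨q, hq⟩ := hne
    rw [Finset.mem_sdiff] at hq
    have hTS' : T ⊆ S.erase q := fun p hp =>
      Finset.mem_erase.2 ⟨fun h => hq.2 (h ▸ hp), hTS hp⟩
    have hS'B : S.erase q ⊆ B := (Finset.erase_subset q S).trans hSB
    have hschr : IsSchroderTree ν (S.erase q) := sandwich hT hBreg hBcomp hTS' hS'B
    have hstep : ContractStep ν S (S.erase q) := ⟨q, hq.1, rfl, hschr⟩
    have hcard' : (S.erase q \ T).card = n := by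
      rw [Finset.erase_sdiff_comm]
      rw [Finset.card_erase_of_mem (Finset.mem_sdiff.2 hq)]
      omega
    exact Relation.ReflTransGen.head hstep (ih _ hcard' hTS' hS'B)

theorem schroderTree_iff_contraction_of_binary' (ν : List Step) :
    (∀ T : Finset (ℕ × ℕ), IsSchroderTree ν T →
      ∃ B : Finset (ℕ × ℕ), IsBinaryTree ν B ∧ Relation.ReflTransGen (ContractStep ν) B T) ∧
    (∀ B T : Finset (ℕ × ℕ), IsBinaryTree ν B →
      Relation.ReflTransGen (ContractStep ν) B T → IsSchroderTree ν T) := by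
  constructor
  · intro T hT
    obtain ⟨B, hB, hTB⟩ := exists_binary_extension ν T hT.1 hT.2.1
    exact ⟨B, hB, chain ν hT hB.1 hB.2.1 hTB⟩
  · intro B T hB h
    induction h with
    | refl => exact binary_isSchroder ν B hB
    | tail _ hstep _ =>
      obtain ⟨q, -, rfl, hschr⟩ := hstep
      exact hschr

/-- Every ν-Schröder tree is obtained from some ν-binary tree by a sequence
of contractions, and conversely every sequence of contractions of a ν-binary tree yields a
ν-Schröder tree. -/
theorem schroderTree_iff_contraction_of_binary (ν : List Step) (hν : IsLatticePath ν) :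
    (∀ T : Finset (ℕ × ℕ), IsSchroderTree ν T →
      ∃ B : Finset (ℕ × ℕ), IsBinaryTree ν B ∧ Relation.ReflTransGen (ContractStep ν) B T) ∧
    (∀ B T : Finset (ℕ × ℕ), IsBinaryTree ν B →
      Relation.ReflTransGen (ContractStep ν) B T → IsSchroderTree ν T) :=
  schroderTree_iff_contraction_of_binary' ν
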